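/- The element ξ_{1234} does not belong to the derived subalgebra K'_4 of the conformal superalgebra K_4; more precisely, K'_4 is the ℂ-linear span of the set {∂^k ξ_I : I a strictly increasing sequence in {1,2,3,4}, I ≠ (1,2,3,4), k ≥ 0} ∪ {∂^l ξ_{1234} : l > 0}. -/

import Mathlib

/-!
The conformal superalgebra `K₄ = ℂ[∂] ⊗ Λ(4)`, a free `ℂ[∂]`-module with basis the
monomials `ξ_I` (`I ⊆ {1,2,3,4}` increasing), with `λ`-bracket
`[ξ_I λ ξ_J] = (|I|-2) ∂ξ_{IJ} + (-1)^{|I|} ∑ᵢ ∂ᵢξ_I ∂ᵢξ_J + λ (|I|+|J|-4) ξ_{IJ}`,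
i.e. with `n`-products (`[a λ b] = ∑ₙ (λⁿ/n!) (a₍ₙ₎b)`)
`(ξ_I ₍₀₎ ξ_J) = (|I|-2) ∂ξ_{IJ} + (-1)^{|I|} ∑ᵢ ∂ᵢξ_I ∂ᵢξ_J`,
`(ξ_I ₍₁₎ ξ_J) = (|I|+|J|-4) ξ_{IJ}`, `(ξ_I ₍ₙ₎ ξ_J) = 0` for `n ≥ 2`,
extended to all of `K₄` by the axioms `(∂a ₍₀₎ b) = 0`, `(∂a ₍ₙ₎ b) = -n (a ₍ₙ₋₁₎ b)`
and `(a ₍ₙ₎ ∂b) = ∂(a ₍ₙ₎ b) + n (a ₍ₙ₋₁₎ b)`.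
-/

open Finset

noncomputable section

/-- Index set of a Grassmann monomial in `ξ₁,…,ξ₄` (0-indexed). -/
abbrev Idx : Type := Finset (Fin 4)

/-- Sign with which two Grassmann monomials multiply: `ξ_I ξ_J = msign I J • ξ_{I ∪ J}`
for `I, J` disjoint. -/
def msign (I J : Idx) : ℤ := (-1 : ℤ) ^ ((I ×ˢ J).filter (fun p => p.2 < p.1)).card

/-- Sign of `∂ᵢ ξ_I` (for `i ∈ I`): `∂ᵢ ξ_I = dsign i I • ξ_{I \ {i}}`. -/
def dsign (i : Fin 4) (I : Idx) : ℤ := (-1 : ℤ) ^ (I.filter (fun j => j < i)).card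

/-- The conformal superalgebra `K₄ = ℂ[∂] ⊗ Λ(4)`, with basis `∂^k ξ_I`. -/
abbrev K4 : Type := (ℕ × Idx) →₀ ℂ

/-- The basis element `∂^k ξ_I` of `K₄`. -/
def pb (k : ℕ) (I : Idx) : K4 := Finsupp.single (k, I) 1

/-- The operator `∂` on `K₄`. -/
def der : K4 →ₗ[ℂ] K4 := Finsupp.lmapDomain ℂ ℂ (fun p => (p.1 + 1, p.2))

/-- `∂^k ξ_I ξ_J` (zero if `I, J` are not disjoint). -/
def xi4 (k : ℕ) (I J : Idx) : K4 :=
  if Disjoint I J then ((msign I J : ℤ) : ℂ) • pb k (I ∪ J) else 0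

/-- `∑ᵢ ∂ᵢξ_I ∂ᵢξ_J`. -/
def dd4 (I J : Idx) : K4 :=
  ∑ i : Fin 4,
    if i ∈ I ∧ i ∈ J then
      ((dsign i I * dsign i J : ℤ) : ℂ) • xi4 0 (I.erase i) (J.erase i)
    else 0

/-- The `0`-product `(ξ_I ₍₀₎ ξ_J) = (|I|-2) ∂ξ_{IJ} + (-1)^{|I|} ∑ᵢ ∂ᵢξ_I ∂ᵢξ_J`. -/
def prod0 (I J : Idx) : K4 :=
  (((I.card : ℤ) - 2 : ℤ) : ℂ) • xi4 1 I J + ((-1 : ℂ) ^ I.card) • dd4 I J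

/-- The `1`-product `(ξ_I ₍₁₎ ξ_J) = (|I|+|J|-4) ξ_{IJ}`. -/
def prod1 (I J : Idx) : K4 :=
  (((I.card : ℤ) + (J.card : ℤ) - 4 : ℤ) : ℂ) • xi4 0 I J

/-- The coordinate functional at `(0, univ)`. -/
def phi : K4 →ₗ[ℂ] ℂ := Finsupp.lapply ((0 : ℕ), (Finset.univ : Idx))

lemma phi_pb (k : ℕ) (I : Idx) :
    phi (pb k I) = if ((k, I) : ℕ × Idx) = ((0 : ℕ), (Finset.univ : Idx)) then 1 else 0 := by
  simp [phi, pb, Finsupp.single_apply]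

lemma phi_pb_univ : phi (pb 0 Finset.univ) = 1 := by simp [phi_pb]

lemma der_pb (k : ℕ) (I : Idx) : der (pb k I) = pb (k + 1) I := by
  simp [der, pb, Finsupp.lmapDomain_apply, Finsupp.mapDomain_single]

lemma phi_der (x : K4) : phi (der x) = 0 := by
  have h : ((0 : ℕ), (Finset.univ : Idx)) ∉
      Set.range (fun p : ℕ × Idx => (p.1 + 1, p.2)) := by
    rintro ⟨⟨k, I⟩, h⟩
    simp [Prod.ext_iff] at h
  simp only [phi, der, Finsupp.lmapDomain_apply, Finsupp.lapply_apply]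
  exact Finsupp.mapDomain_notin_range x _ h

lemma phi_xi4_one (I J : Idx) : phi (xi4 1 I J) = 0 := by
  unfold xi4
  split
  · rw [map_smul, phi_pb]
    simp
  · simp

lemma phi_xi4_zero_ne (I J : Idx) (h : I ∪ J ≠ Finset.univ) : phi (xi4 0 I J) = 0 := by
  unfold xi4
  split
  · rw [map_smul, phi_pb, if_neg (by simp [Prod.ext_iff, h])]
    simp
  · simp

lemma phi_dd4 (I J : Idx) : phi (dd4 I J) = 0 := by
  unfold dd4
  rw [map_sum]
  refine Finset.sum_eq_zero fun i _ => ?_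
  split
  · have hne : I.erase i ∪ J.erase i ≠ Finset.univ := by
      intro he
      have hi : i ∈ I.erase i ∪ J.erase i := he ▸ Finset.mem_univ i
      simp at hi
    rw [map_smul, phi_xi4_zero_ne _ _ hne]
    simp
  · simp

lemma phi_prod0 (I J : Idx) : phi (prod0 I J) = 0 := by
  simp [prod0, phi_xi4_one, phi_dd4]

lemma phi_prod1 (I J : Idx) : phi (prod1 I J) = 0 := by
  unfold prod1
  rw [map_smul]
  by_cases hd : Disjoint I J
  · by_cases hu : I ∪ J = Finset.univ
    · have hc : I.card + J.card = 4 := by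
        have := Finset.card_union_of_disjoint hd
        rw [hu] at this
        simpa using this.symm
      have hz : (((I.card : ℤ) + (J.card : ℤ) - 4 : ℤ) : ℂ) = 0 := by
        have h4 : (I.card : ℤ) + (J.card : ℤ) - 4 = 0 := by omega
        rw [h4]; norm_num
      rw [hz, zero_smul]
    · rw [phi_xi4_zero_ne I J hu, smul_zero]
  · unfold xi4
    rw [if_neg hd]
    simp

lemma single_eq_smul_pb (q : ℕ × Idx) (c : ℂ) :
    Finsupp.single q c = c • pb q.1 q.2 := by
  obtain ⟨k, I⟩ := q
  simp [pb, Finsupp.smul_single']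

/-- **`ξ₁₂₃₄ ∉ K'₄`** (Proposition `xi1234`).
The derived subalgebra `K'₄` of the conformal superalgebra `K₄`, i.e. the ℂ-span of all the
`n`-products `a ₍ₙ₎ b`, does not contain `ξ₁₂₃₄`; more precisely,
`K'₄` is the ℂ-linear span of
`{∂^k ξ_I : I ≠ (1,2,3,4), k ≥ 0} ∪ {∂^l ξ₁₂₃₄ : l > 0}`. -/
theorem derived_K4_conformal
    (p : ℕ → K4 →ₗ[ℂ] K4 →ₗ[ℂ] K4)
    (h0 : ∀ I J : Idx, p 0 (pb 0 I) (pb 0 J) = prod0 I J)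
    (h1 : ∀ I J : Idx, p 1 (pb 0 I) (pb 0 J) = prod1 I J)
    (h2 : ∀ n : ℕ, 2 ≤ n → ∀ I J : Idx, p n (pb 0 I) (pb 0 J) = 0)
    (hdl0 : ∀ a b : K4, p 0 (der a) b = 0)
    (hdl : ∀ (n : ℕ) (a b : K4), p (n + 1) (der a) b = (-((n : ℂ) + 1)) • p n a b)
    (hdr : ∀ (n : ℕ) (a b : K4), p n a (der b) = der (p n a b) + (n : ℂ) • p (n - 1) a b) :
    pb 0 Finset.univ ∉ Submodule.span ℂ {z : K4 | ∃ (n : ℕ) (a b : K4), z = p n a b} ∧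
    Submodule.span ℂ {z : K4 | ∃ (n : ℕ) (a b : K4), z = p n a b}
      = Submodule.span ℂ
          ({z : K4 | ∃ (k : ℕ) (I : Idx), I ≠ Finset.univ ∧ z = pb k I}
            ∪ {z : K4 | ∃ l : ℕ, 0 < l ∧ z = pb l Finset.univ}) := by
  set S : Set K4 := {z : K4 | ∃ (n : ℕ) (a b : K4), z = p n a b} with hS
  set G : Set K4 := ({z : K4 | ∃ (k : ℕ) (I : Idx), I ≠ Finset.univ ∧ z = pb k I}
            ∪ {z : K4 | ∃ l : ℕ, 0 < l ∧ z = pb l Finset.univ}) with hG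
  -- phi vanishes on all products, first on basis elements
  have basis0 : ∀ (n : ℕ) (I J : Idx), phi (p n (pb 0 I) (pb 0 J)) = 0 := by
    intro n I J
    match n with
    | 0 => rw [h0]; exact phi_prod0 I J
    | 1 => rw [h1]; exact phi_prod1 I J
    | (n + 2) => rw [h2 (n + 2) (by omega)]; simp
  have basisl : ∀ (l n : ℕ) (I J : Idx), phi (p n (pb 0 I) (pb l J)) = 0 := by
    intro l
    induction l with
    | zero => exact basis0
    | succ l ih =>
      intro n I J
      rw [← der_pb, hdr, map_add, phi_der, map_smul, ih (n - 1) I J, smul_zero, add_zero]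
  have basisk : ∀ (k l n : ℕ) (I J : Idx), phi (p n (pb k I) (pb l J)) = 0 := by
    intro k
    induction k with
    | zero => exact fun l n I J => basisl l n I J
    | succ k ih =>
      intro l n I J
      rw [← der_pb]
      match n with
      | 0 => rw [hdl0]; simp
      | (n + 1) =>
        rw [hdl, map_smul, ih l n I J, smul_zero]
  have phi_p : ∀ (n : ℕ) (a b : K4), phi (p n a b) = 0 := by
    intro n a b
    induction a using Finsupp.induction_linear with
    | zero => simp
    | add f g hf hg => rw [map_add, LinearMap.add_apply, map_add, hf, hg, add_zero]
    | single q c =>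
      induction b using Finsupp.induction_linear with
      | zero => simp
      | add f g hf hg => rw [map_add, map_add, hf, hg, add_zero]
      | single r d =>
        simp only [single_eq_smul_pb, map_smul, LinearMap.smul_apply, basisk, smul_zero]
  have hSker : Submodule.span ℂ S ≤ LinearMap.ker phi := by
    rw [Submodule.span_le]
    rintro z ⟨n, a, b, rfl⟩
    exact phi_p n a b
  -- der-invariance of the span of products
  have der_mem : ∀ x ∈ Submodule.span ℂ S, der x ∈ Submodule.span ℂ S := by
    have him : der '' S ⊆ ↑(Submodule.span ℂ S) := by
      rintro _ ⟨z, ⟨n, a, b, rfl⟩, rfl⟩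
      have : der (p n a b) = p n a (der b) - (n : ℂ) • p (n - 1) a b := by
        rw [hdr, add_sub_cancel_right]
      rw [this]
      exact sub_mem (Submodule.subset_span ⟨n, a, der b, rfl⟩)
        (Submodule.smul_mem _ _ (Submodule.subset_span ⟨n - 1, a, b, rfl⟩))
    intro x hx
    have hmem : der x ∈ Submodule.map der (Submodule.span ℂ S) :=
      Submodule.mem_map_of_mem hx
    rw [Submodule.map_span] at hmem
    exact Submodule.span_le.mpr him hmem
  -- membership of basis elements
  have mem0 : ∀ I : Idx, I ≠ Finset.univ → pb 0 I ∈ Submodule.span ℂ S := by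
    intro I hI
    have hx : xi4 0 I ∅ = pb 0 I := by
      rw [xi4, if_pos (Finset.disjoint_empty_right I)]
      simp [msign]
    have hcast : ((((I.card : ℤ) + (((∅ : Idx).card : ℤ)) - 4 : ℤ)) : ℂ)
        = (I.card : ℂ) - 4 := by
      push_cast [Finset.card_empty]
      ring
    have hp : p 1 (pb 0 I) (pb 0 ∅) = ((I.card : ℂ) - 4) • pb 0 I := by
      rw [h1, prod1, hx, hcast]
    have hlt : I.card < 4 := by
      have := (Finset.card_lt_iff_ne_univ I).2 hI
      simpa using this
    have hc : ((I.card : ℂ) - 4) ≠ 0 := by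
      have : (I.card : ℂ) ≠ 4 := by exact_mod_cast Nat.ne_of_lt hlt
      exact sub_ne_zero.2 this
    have : pb 0 I = ((I.card : ℂ) - 4)⁻¹ • p 1 (pb 0 I) (pb 0 ∅) := by
      rw [hp, smul_smul, inv_mul_cancel₀ hc, one_smul]
    rw [this]
    exact Submodule.smul_mem _ _ (Submodule.subset_span ⟨1, _, _, rfl⟩)
  have mem1univ : pb 1 Finset.univ ∈ Submodule.span ℂ S := by
    have hx : xi4 1 Finset.univ ∅ = pb 1 Finset.univ := by
      rw [xi4, if_pos (Finset.disjoint_empty_right _)]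
      simp [msign]
    have hdd : dd4 Finset.univ ∅ = 0 := by
      unfold dd4
      refine Finset.sum_eq_zero fun i _ => ?_
      simp
    have hcard : (Finset.univ : Idx).card = 4 := by simp
    have hp : p 0 (pb 0 Finset.univ) (pb 0 ∅) = (2 : ℂ) • pb 1 Finset.univ := by
      rw [h0, prod0, hx, hdd, hcard]
      norm_num
    have : pb 1 Finset.univ = (2 : ℂ)⁻¹ • p 0 (pb 0 Finset.univ) (pb 0 ∅) := by
      rw [hp, smul_smul]
      norm_num
    rw [this]
    exact Submodule.smul_mem _ _ (Submodule.subset_span ⟨0, _, _, rfl⟩)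
  have shift : ∀ (m j : ℕ) (I : Idx), pb j I ∈ Submodule.span ℂ S →
      pb (j + m) I ∈ Submodule.span ℂ S := by
    intro m
    induction m with
    | zero => exact fun j I h => h
    | succ m ih =>
      intro j I h
      have := der_mem _ (ih j I h)
      rw [der_pb] at this
      exact this
  constructor
  · intro hmem
    have := hSker hmem
    rw [LinearMap.mem_ker, phi_pb_univ] at this
    exact one_ne_zero this
  · apply le_antisymm
    · rw [Submodule.span_le]
      rintro z ⟨n, a, b, rfl⟩
      have hz : (p n a b) ((0 : ℕ), (Finset.univ : Idx)) = 0 := phi_p n a b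
      -- decompose as a sum of singles
      rw [← Finsupp.sum_single (p n a b)]
      refine Submodule.sum_mem _ fun q hq' => ?_
      have hq := Finsupp.mem_support_iff.mp hq'
      rw [single_eq_smul_pb]
      refine Submodule.smul_mem _ _ (Submodule.subset_span ?_)
      by_cases hqu : q.2 = Finset.univ
      · right
        refine ⟨q.1, ?_, by rw [hqu]⟩
        rcases Nat.eq_zero_or_pos q.1 with h0' | h0'
        · exfalso
          apply hq
          have : q = ((0 : ℕ), (Finset.univ : Idx)) := Prod.ext h0' hqu
          rw [this]
          exact hz
        · exact h0'
      · left
        exact ⟨q.1, q.2, hqu, rfl⟩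
    · rw [Submodule.span_le]
      rintro z (⟨k, I, hI, rfl⟩ | ⟨l, hl, rfl⟩)
      · have := shift k 0 I (mem0 I hI)
        simpa using this
      · obtain ⟨m, rfl⟩ := Nat.exists_eq_add_of_lt hl
        have hm := shift m 1 Finset.univ mem1univ
        have he : 0 + m + 1 = 1 + m := by omega
        rw [he]
        exact hm


end
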